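/- For every inclusion of simplicial sets X ↪ Y and every set ν of vertices of Y, the inclusion X ↪ Y widened at ν, i.e. the monomorphism ({0} × Y) ∪ W_{ν ∩ X₀}(X) ↪ W_ν(Y), is a retract in the arrow category of SSet of the pushout-product ({0} ↪ J) □ (X ↪ Y) : ({0} × Y) ∪ (J × X) ↪ J × Y. -/

import Mathlib

open CategoryTheory Simplicial Opposite Limits

namespace Paper

/-! ## The simplicial set `J`, nerve of the free-living isomorphism -/

/-- The simplicial set `J`, the nerve of the free-living isomorphism `𝕀`:
its `n`-simplices are the tuples `{0,1}^(n+1)` (recorded as `Bool`-valued functions,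
`false` being the vertex `0` and `true` the vertex `1`), with all simplicial
operators acting by reindexing. -/
def J : SSet.{0} where
  obj m := Fin (m.unop.len + 1) → Bool
  map f := TypeCat.ofHom (fun a => a ∘ f.unop.toOrderHom)
  map_id _ := rfl
  map_comp _ _ := rfl

/-- The two vertices `0, 1 : Δ[0] ⟶ J` of `J`; `ptJ false` is the vertex `0` and
`ptJ true` is the vertex `1`. -/
def ptJ (b : Bool) : Δ[0] ⟶ J where
  app _ := TypeCat.ofHom (fun _ => fun _ => b)
  naturality _ _ _ := rfl

/-- The boundary `∂J = {0} ∪ {1}` of `J` (two discrete points). -/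
def bJ : SSet.{0} where
  obj _ := Bool
  map _ := TypeCat.ofHom (fun b => b)
  map_id _ := rfl
  map_comp _ _ := rfl

/-- The inclusion `∂J ↪ J`. -/
def bJIncl : bJ ⟶ J where
  app _ := TypeCat.ofHom (fun b => fun _ => b)
  naturality _ _ _ := rfl

/-! ## Binary products and pushout-products -/

/-- The (pointwise) product of two simplicial sets. -/
def sprod (X Y : SSet.{0}) : SSet.{0} where
  obj m := X.obj m × Y.obj m
  map f := TypeCat.ofHom (fun p => (X.map f p.1, Y.map f p.2))
  map_id m := by
    ext p
    · exact FunctorToTypes.map_id_apply X p.1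
    · exact FunctorToTypes.map_id_apply Y p.2
  map_comp f g := by
    ext p
    · exact FunctorToTypes.map_comp_apply X f g p.1
    · exact FunctorToTypes.map_comp_apply Y f g p.2

/-- The product of two morphisms of simplicial sets. -/
def sprodMap {X X' Y Y' : SSet.{0}} (f : X ⟶ X') (g : Y ⟶ Y') : sprod X Y ⟶ sprod X' Y' where
  app m := TypeCat.ofHom (fun p => (f.app m p.1, g.app m p.2))
  naturality m m' φ := by
    ext p
    have h1 := NatTrans.naturality_apply f φ p.1
    have h2 := NatTrans.naturality_apply g φ p.2
    exact Prod.ext h1 h2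

/-- The pushout-product `f □ g : (A × Z) ∪ (B × W) ⟶ B × Z` of `f : A ⟶ B` and
`g : W ⟶ Z`, the domain being presented as the pushout `(A × Z) ∪_{A × W} (B × W)`. -/
noncomputable def pp {A B W Z : SSet.{0}} (f : A ⟶ B) (g : W ⟶ Z) :
    pushout (sprodMap (𝟙 A) g) (sprodMap f (𝟙 W)) ⟶ sprod B Z :=
  pushout.desc (sprodMap f (𝟙 Z)) (sprodMap (𝟙 B) g) rfl

/-! ## Saturated classes of morphisms -/

/-- A class of morphisms is stable under retracts if, whenever `f` is a retract of `g`
in the arrow category, membership of `g` implies membership of `f`. -/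
def StableUnderRetracts (T : MorphismProperty SSet.{0}) : Prop :=
  ∀ ⦃X Y X' Y' : SSet.{0}⦄ (f : X ⟶ Y) (g : X' ⟶ Y')
    (i : Arrow.mk f ⟶ Arrow.mk g) (r : Arrow.mk g ⟶ Arrow.mk f),
    i ≫ r = 𝟙 _ → T g → T f

/-- The inclusion functor `Set.Iio i ⥤ ι`. -/
def iioFunctor {ι : Type} [Preorder ι] (i : ι) : Set.Iio i ⥤ ι :=
  Monotone.functor (f := Subtype.val) (fun _ _ h => h)

/-- The cocone on the restriction of `F : ι ⥤ SSet` to `Set.Iio i` with apex `F.obj i`. -/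
def restrictionCocone {ι : Type} [Preorder ι] (F : ι ⥤ SSet.{0}) (i : ι) :
    Cocone (iioFunctor i ⋙ F) where
  pt := F.obj i
  ι :=
    { app := fun j => F.map (homOfLE j.2.le)
      naturality := fun j k h => by
        dsimp [iioFunctor]
        rw [← F.map_comp, Category.comp_id]
        congr 1 }

/-- A class of morphisms is stable under transfinite composition if, for every
well-ordered type `ι` and every functor `F : ι ⥤ SSet` which is continuous at limit
stages and whose successor maps `F.obj i ⟶ F.obj (i+1)` all belong to the class, and
every colimit cocone `c` on `F`, the transfinite composite `F.obj ⊥ ⟶ c.pt` belongs to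
the class. -/
def StableUnderTransfiniteComposition (T : MorphismProperty SSet.{0}) : Prop :=
  ∀ (ι : Type) [LinearOrder ι] [SuccOrder ι] [OrderBot ι] [WellFoundedLT ι]
    (F : ι ⥤ SSet.{0}),
    (∀ i : ι, ¬IsMax i → T (F.map (homOfLE (Order.le_succ i)))) →
    (∀ i : ι, Order.IsSuccLimit i → Nonempty (IsColimit (restrictionCocone F i))) →
    ∀ (c : Cocone F), IsColimit c → T (c.ι.app ⊥)

/-- A class of morphisms of simplicial sets is saturated if it is closed under
isomorphisms, pushouts, transfinite compositions, and retracts. -/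
structure IsSaturated (T : MorphismProperty SSet.{0}) : Prop where
  respectsIso : T.RespectsIso
  stableUnderCobaseChange : T.IsStableUnderCobaseChange
  stableUnderRetracts : StableUnderRetracts T
  stableUnderTransfiniteComposition : StableUnderTransfiniteComposition T

/-- The saturated closure of a class of morphisms: the smallest saturated class
containing it. -/
def satClosure (S : MorphismProperty SSet.{0}) : MorphismProperty SSet.{0} :=
  fun _ _ f => ∀ T : MorphismProperty SSet.{0}, IsSaturated T → S ≤ T → T f

/-! ## Subcomplexes -/

/-- A subcomplex of a simplicial set. -/
structure Sub (X : SSet.{0}) where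
  carrier : ∀ m, Set (X.obj m)
  map_mem : ∀ ⦃m m' : SimplexCategoryᵒᵖ⦄ (f : m ⟶ m') ⦃σ : X.obj m⦄,
    σ ∈ carrier m → X.map f σ ∈ carrier m'

/-- The simplicial set underlying a subcomplex. -/
def Sub.toSSet {X : SSet.{0}} (S : Sub X) : SSet.{0} where
  obj m := S.carrier m
  map f := TypeCat.ofHom (fun σ => ⟨X.map f σ.1, S.map_mem f σ.2⟩)
  map_id m := by
    ext σ
    exact FunctorToTypes.map_id_apply X σ.1
  map_comp f g := by
    ext σ
    exact FunctorToTypes.map_comp_apply X f g σ.1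

/-- The inclusion of a subcomplex. -/
def Sub.ι {X : SSet.{0}} (S : Sub X) : S.toSSet ⟶ X where
  app _ := TypeCat.ofHom (fun σ => σ.1)
  naturality _ _ _ := rfl

/-- Containment of subcomplexes. -/
def Sub.Le {X : SSet.{0}} (S T : Sub X) : Prop := ∀ m, S.carrier m ⊆ T.carrier m

/-- The inclusion map associated to a containment of subcomplexes. -/
def Sub.homOfLe {X : SSet.{0}} {S T : Sub X} (h : S.Le T) : S.toSSet ⟶ T.toSSet where
  app m := TypeCat.ofHom (fun σ => ⟨σ.1, h m σ.2⟩)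
  naturality _ _ _ := rfl

/-- The union of two subcomplexes. -/
def Sub.union {X : SSet.{0}} (S T : Sub X) : Sub X where
  carrier m := S.carrier m ∪ T.carrier m
  map_mem _ _ f _ h := h.imp (fun hs => S.map_mem f hs) (fun ht => T.map_mem f ht)

/-- The intersection of two subcomplexes. -/
def Sub.inter {X : SSet.{0}} (S T : Sub X) : Sub X where
  carrier m := S.carrier m ∩ T.carrier m
  map_mem _ _ f _ h := ⟨S.map_mem f h.1, T.map_mem f h.2⟩

/-- A subcomplex `S` of `X`, viewed as a subcomplex of (the simplicial set underlying)
another subcomplex `T` of `X`. -/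
def Sub.restrict {X : SSet.{0}} (T S : Sub X) : Sub T.toSSet where
  carrier m := {σ | σ.1 ∈ S.carrier m}
  map_mem _ _ f _ h := S.map_mem f h

/-- The (dimension zero) object of `SimplexCategoryᵒᵖ` indexing vertices. -/
abbrev V0 : SimplexCategoryᵒᵖ := Opposite.op (SimplexCategory.mk 0)

/-- The full subcomplex of `X` on a set `ν` of vertices: the simplices all of whose
vertices lie in `ν`. -/
def fullSub (X : SSet.{0}) (ν : Set (X.obj V0)) : Sub X where
  carrier m := {σ | ∀ g : SimplexCategory.mk 0 ⟶ m.unop, X.map g.op σ ∈ ν}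
  map_mem := by
    intro m m' f σ hσ g
    rw [← FunctorToTypes.map_comp_apply]
    exact hσ (g ≫ f.unop)

/-! ## Widenings and widened inclusions -/

/-- The widening `W_ν(X)` of `X` at a set `ν` of vertices: the full subcomplex of
`J × X` on the vertex set `({0} × X₀) ∪ ({1} × ν)`. -/
def wideSub (X : SSet.{0}) (ν : Set (X.obj V0)) : Sub (sprod J X) :=
  fullSub (sprod J X) {p | p.1 0 = true → p.2 ∈ ν}

/-- The subcomplex `{0} × X` of `J × X` (the full subcomplex on the vertices
`{0} × X₀`). -/
def zeroSlice (X : SSet.{0}) : Sub (sprod J X) :=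
  fullSub (sprod J X) {p | p.1 0 = false}

/-- For `A` a subcomplex of `Y`, the subcomplex `J × A` of `J × Y`. -/
def Sub.prodJ {Y : SSet.{0}} (A : Sub Y) : Sub (sprod J Y) where
  carrier m := {p | p.2 ∈ A.carrier m}
  map_mem _ _ f _ h := A.map_mem f h

/-- Given a subcomplex (inclusion) `A = X ⊆ Y` and a set `ν` of vertices of `Y`, the
subcomplex `({0} × Y) ∪ W_{ν ∩ X₀}(X)` of `J × Y`: the domain of the inclusion
`X ↪ Y` widened at `ν`. -/
def widenedSub (Y : SSet.{0}) (A : Sub Y) (ν : Set (Y.obj V0)) : Sub (sprod J Y) :=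
  (zeroSlice Y).union ((wideSub Y (ν ∩ A.carrier V0)).inter A.prodJ)

lemma zeroSlice_le_wideSub (Y : SSet.{0}) (ν : Set (Y.obj V0)) :
    (zeroSlice Y).Le (wideSub Y ν) := by
  intro m σ hσ g h
  exact absurd (hσ g) (by simp [h])

lemma wideSub_mono (Y : SSet.{0}) {ν ν' : Set (Y.obj V0)} (h : ν ⊆ ν') :
    (wideSub Y ν).Le (wideSub Y ν') :=
  fun _ σ hσ g ht => h (hσ g ht)

lemma widenedSub_le (Y : SSet.{0}) (A : Sub Y) (ν : Set (Y.obj V0)) :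
    (widenedSub Y A ν).Le (wideSub Y ν) := by
  refine fun m σ hσ => Or.elim hσ (fun h => ?_) (fun h => ?_)
  · exact zeroSlice_le_wideSub Y ν m h
  · exact wideSub_mono Y Set.inter_subset_left m h.1

/-- The inclusion `X ↪ Y` widened at `ν`: the inclusion
`({0} × Y) ∪ W_{ν ∩ X₀}(X) ↪ W_ν(Y)`. -/
def widenedIncl (Y : SSet.{0}) (A : Sub Y) (ν : Set (Y.obj V0)) :
    (widenedSub Y A ν).toSSet ⟶ (wideSub Y ν).toSSet :=
  Sub.homOfLe (widenedSub_le Y A ν)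

/-- `Wide`: the class of all widened inclusions. -/
def Wide : MorphismProperty SSet.{0} := fun _ _ h =>
  ∃ (Y : SSet.{0}) (A : Sub Y) (ν : Set (Y.obj V0)),
    Arrow.mk h = Arrow.mk (widenedIncl Y A ν)

/-- `Wide^(1)`: the class of inclusions widened at a single vertex. -/
def Wide1 : MorphismProperty SSet.{0} := fun _ _ h =>
  ∃ (Y : SSet.{0}) (A : Sub Y) (v : Y.obj V0),
    Arrow.mk h = Arrow.mk (widenedIncl Y A {v})

/-! ## Narrow vertices -/

/-- A vertex `v` of `Y` is narrow if every simplex of `Y` has at most one vertex equal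
to `v`. -/
def Narrow (Y : SSet.{0}) (v : Y.obj V0) : Prop :=
  ∀ ⦃m : SimplexCategoryᵒᵖ⦄ (σ : Y.obj m) (g g' : SimplexCategory.mk 0 ⟶ m.unop),
    Y.map g.op σ = v → Y.map g'.op σ = v → g = g'

/-- `Wide_nar`: the class of inclusions widened at a narrow set of vertices. -/
def WideNar : MorphismProperty SSet.{0} := fun _ _ h =>
  ∃ (Y : SSet.{0}) (A : Sub Y) (ν : Set (Y.obj V0)),
    (∀ v ∈ ν, Narrow Y v) ∧ Arrow.mk h = Arrow.mk (widenedIncl Y A ν)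

/-- `Wide_nar^(1)`: the class of inclusions widened at a single narrow vertex. -/
def WideNar1 : MorphismProperty SSet.{0} := fun _ _ h =>
  ∃ (Y : SSet.{0}) (A : Sub Y) (v : Y.obj V0),
    Narrow Y v ∧ Arrow.mk h = Arrow.mk (widenedIncl Y A {v})

/-! ## Standard simplices, boundaries, skeleta, iso-horns -/

/-- The unique map to the terminal simplicial set `Δ[0]`. -/
def toPt (X : SSet.{0}) : X ⟶ Δ[0] where
  app m := TypeCat.ofHom (fun _ => SSet.stdSimplex.const 0 0 m)
  naturality m m' f := by
    ext x
    apply SSet.stdSimplex.objEquiv.injective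
    apply SimplexCategory.Hom.ext
    apply OrderHom.ext
    funext j
    exact Subsingleton.elim (α := Fin 1) _ _

/-- The `i`-th vertex of the standard simplex `Δ[n]`. -/
def vrt (n : ℕ) (i : Fin (n + 1)) : Δ[n].obj V0 :=
  SSet.stdSimplex.const n i V0

/-- The boundary `∂Δ[n]`, as a subcomplex of `Δ[n]`: the simplices which are not
surjective as monotone maps. -/
def bSub (n : ℕ) : Sub Δ[n] where
  carrier m := {σ | ¬Function.Surjective (SSet.stdSimplex.asOrderHom σ)}
  map_mem _ _ f σ hσ h := hσ (Function.Surjective.of_comp h)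

/-- The `k`-skeleton of `Y`, as a subcomplex: the simplices which factor through some
simplex of dimension at most `k`. -/
def skSub (Y : SSet.{0}) (k : ℕ) : Sub Y where
  carrier m := {σ | ∃ (j : ℕ) (_ : j ≤ k) (f : m.unop ⟶ SimplexCategory.mk j)
    (τ : Y.obj (Opposite.op (SimplexCategory.mk j))), Y.map f.op τ = σ}
  map_mem := by
    rintro m m' φ σ ⟨j, hj, f, τ, rfl⟩
    exact ⟨j, hj, φ.unop ≫ f, τ, by rw [← FunctorToTypes.map_comp_apply]; rfl⟩

/-- A `k`-simplex is nondegenerate if it admits no factorization through a simplex of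
strictly smaller dimension. -/
def Nondegenerate (Y : SSet.{0}) {k : ℕ} (σ : Y.obj (Opposite.op (SimplexCategory.mk k))) :
    Prop :=
  ∀ (j : ℕ) (f : SimplexCategory.mk k ⟶ SimplexCategory.mk j)
    (τ : Y.obj (Opposite.op (SimplexCategory.mk j))), Y.map f.op τ = σ → k ≤ j

/-- The iso-horn inclusion `𝕍_i[m+1] ↪ ∇̄_i[m+1]`: the boundary inclusion
`∂Δ[m] ↪ Δ[m]` widened at the single vertex `i`, i.e. the inclusion
`({0} × Δ[m]) ∪ W_i(∂Δ[m]) ↪ W_i(Δ[m])` of the iso-horn into the isoplex. -/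
def isoHornIncl (m : ℕ) (i : Fin (m + 1)) :
    (widenedSub Δ[m] (bSub m) {vrt m i}).toSSet ⟶ (wideSub Δ[m] {vrt m i}).toSSet :=
  widenedIncl Δ[m] (bSub m) {vrt m i}

/-- `IsoHorn`: the class of all iso-horn inclusions. -/
def IsoHorn : MorphismProperty SSet.{0} := fun _ _ h =>
  ∃ (m : ℕ) (i : Fin (m + 1)), Arrow.mk h = Arrow.mk (isoHornIncl m i)

/-! ## The classes `({0} ↪ J) □ Bdry` and `({0} ↪ J) □ Mono` -/

/-- The class `({0} ↪ J) □ Bdry` of pushout-products of the vertex `0 : Δ[0] ⟶ J`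
with the boundary inclusions `∂Δ[n] ↪ Δ[n]`. -/
def ppJ0Bdry : MorphismProperty SSet.{0} := fun _ _ h =>
  ∃ n : ℕ, Arrow.mk h = Arrow.mk (pp (ptJ false) (∂Δ[n].ι))

/-- The class `({0} ↪ J) □ Mono` of pushout-products of the vertex `0 : Δ[0] ⟶ J`
with all monomorphisms of simplicial sets. -/
def ppJ0Mono : MorphismProperty SSet.{0} := fun _ _ h =>
  ∃ (W Z : SSet.{0}) (g : W ⟶ Z), Mono g ∧ Arrow.mk h = Arrow.mk (pp (ptJ false) g)




/-! ## Auxiliary material for Statement 5 -/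

namespace Retr

/-- The `i`-th vertex of a simplex. -/
def vtx (Y : SSet.{0}) {m : SimplexCategoryᵒᵖ} (σ : Y.obj m) (i : Fin (m.unop.len + 1)) :
    Y.obj V0 :=
  Y.map (SimplexCategory.const (SimplexCategory.mk 0) m.unop i).op σ

lemma vtx_eq (Y : SSet.{0}) {m : SimplexCategoryᵒᵖ} (σ : Y.obj m)
    (g : SimplexCategory.mk 0 ⟶ m.unop) :
    Y.map g.op σ = vtx Y σ (g.toOrderHom 0) := by
  rw [vtx]
  congr 1
  rw [← SimplexCategory.eq_const_of_zero]

lemma vtx_map (Y : SSet.{0}) {m m' : SimplexCategoryᵒᵖ} (f : m ⟶ m') (σ : Y.obj m)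
    (i : Fin (m'.unop.len + 1)) :
    vtx Y (Y.map f σ) i = vtx Y σ (f.unop.toOrderHom i) := by
  dsimp [vtx]
  rw [← FunctorToTypes.map_comp_apply]
  rfl

/-- Priming a `J`-coordinate tuple: keep `a i` where vertex `i` lies in `ν`, set
the rest to `false`. -/
noncomputable def prime (Y : SSet.{0}) (ν : Set (Y.obj V0)) {m : SimplexCategoryᵒᵖ}
    (σ : Y.obj m) (a : Fin (m.unop.len + 1) → Bool) : Fin (m.unop.len + 1) → Bool :=
  fun i => by classical exact if vtx Y σ i ∈ ν then a i else false

lemma prime_def (Y : SSet.{0}) (ν : Set (Y.obj V0)) {m : SimplexCategoryᵒᵖ}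
    (σ : Y.obj m) (a : Fin (m.unop.len + 1) → Bool) (i : Fin (m.unop.len + 1))
    [Decidable (vtx Y σ i ∈ ν)] :
    prime Y ν σ a i = if vtx Y σ i ∈ ν then a i else false := by
  rw [prime]
  congr

lemma prime_comp (Y : SSet.{0}) (ν : Set (Y.obj V0)) {m m' : SimplexCategoryᵒᵖ}
    (f : m ⟶ m') (σ : Y.obj m) (a : Fin (m.unop.len + 1) → Bool) :
    prime Y ν (Y.map f σ) (a ∘ f.unop.toOrderHom)
      = prime Y ν σ a ∘ f.unop.toOrderHom := by
  classical
  funext i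
  simp only [Function.comp, prime_def, vtx_map]

lemma prime_false (Y : SSet.{0}) (ν : Set (Y.obj V0)) {m : SimplexCategoryᵒᵖ}
    (σ : Y.obj m) :
    prime Y ν σ (fun _ => false) = fun _ => false := by
  classical
  funext i
  simp [prime_def]

lemma prime_eq_self (Y : SSet.{0}) (ν : Set (Y.obj V0)) {m : SimplexCategoryᵒᵖ}
    (σ : Y.obj m) (a : Fin (m.unop.len + 1) → Bool)
    (h : ∀ i, a i = true → vtx Y σ i ∈ ν) :
    prime Y ν σ a = a := by
  classical
  funext i
  by_cases hv : vtx Y σ i ∈ ν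
  · simp [prime_def, hv]
  · cases ha : a i
    · simp [prime_def, hv, ha]
    · exact absurd (h i ha) hv

lemma prime_true (Y : SSet.{0}) (ν : Set (Y.obj V0)) {m : SimplexCategoryᵒᵖ}
    (σ : Y.obj m) (a : Fin (m.unop.len + 1) → Bool) (i : Fin (m.unop.len + 1))
    (h : prime Y ν σ a i = true) : vtx Y σ i ∈ ν := by
  classical
  by_cases hv : vtx Y σ i ∈ ν
  · exact hv
  · rw [prime_def, if_neg hv] at h
    exact absurd h (by simp)

/-- Membership of the primed simplex in `W_ν(Y)`. -/
lemma prime_mem (Y : SSet.{0}) (ν : Set (Y.obj V0)) {m : SimplexCategoryᵒᵖ}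
    (σ : Y.obj m) (a : Fin (m.unop.len + 1) → Bool) :
    ((prime Y ν σ a, σ) : (sprod J Y).obj m) ∈ (wideSub Y ν).carrier m := by
  intro g ht
  rw [show ((sprod J Y).map g.op (prime Y ν σ a, σ)).2 = Y.map g.op σ from rfl, vtx_eq]
  exact prime_true Y ν σ a (g.toOrderHom 0) ht

/-- The retraction `J × Y ⟶ W_ν(Y)` on codomains. -/
noncomputable def rRight (Y : SSet.{0}) (ν : Set (Y.obj V0)) :
    sprod J Y ⟶ (wideSub Y ν).toSSet where
  app m := TypeCat.ofHom (fun p => ⟨(prime Y ν p.2 p.1, p.2), prime_mem Y ν p.2 p.1⟩)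
  naturality m m' f := by
    ext p
    exact Subtype.ext (Prod.ext (prime_comp Y ν f p.2 p.1) rfl)

lemma rRight_retract (Y : SSet.{0}) (ν : Set (Y.obj V0)) :
    (wideSub Y ν).ι ≫ rRight Y ν = 𝟙 _ := by
  ext m x
  refine Subtype.ext (Prod.ext ?_ rfl)
  refine prime_eq_self Y ν x.1.2 x.1.1 (fun i hi => ?_)
  have := x.2 (SimplexCategory.const (SimplexCategory.mk 0) m.unop i) hi
  rwa [vtx_eq, SimplexCategory.const_apply] at this

variable (Y : SSet.{0}) (A : Sub Y) (ν : Set (Y.obj V0))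

/-- The pushout appearing as the domain of the pushout-product. -/
noncomputable abbrev PO : SSet.{0} :=
  pushout (sprodMap (𝟙 Δ[0]) A.ι) (sprodMap (ptJ false) (𝟙 A.toSSet))

/-- First pushout injection. -/
noncomputable def poInl : sprod Δ[0] Y ⟶ PO Y A := pushout.inl _ _

/-- Second pushout injection. -/
noncomputable def poInr : sprod J A.toSSet ⟶ PO Y A := pushout.inr _ _

/-- First leg of the retraction on domains: `Δ[0] × Y ⟶ ({0} × Y) ∪ W_{ν ∩ A}(A)`. -/
def k1 : sprod Δ[0] Y ⟶ (widenedSub Y A ν).toSSet where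
  app m := TypeCat.ofHom (fun p => ⟨((fun _ => false), p.2), Or.inl (fun _ => rfl)⟩)
  naturality _ _ _ := rfl

/-- Second leg of the retraction on domains: `J × A ⟶ ({0} × Y) ∪ W_{ν ∩ A}(A)`. -/
noncomputable def k2 : sprod J A.toSSet ⟶ (widenedSub Y A ν).toSSet where
  app m := TypeCat.ofHom (fun p => ⟨(prime Y ν p.2.1 p.1, p.2.1), Or.inr
    ⟨fun g ht => ⟨by
        rw [show ((sprod J Y).map g.op (prime Y ν p.2.1 p.1, p.2.1)).2
              = Y.map g.op p.2.1 from rfl, vtx_eq]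
        exact prime_true Y ν p.2.1 p.1 (g.toOrderHom 0) ht,
      A.map_mem g.op p.2.2⟩,
    p.2.2⟩⟩)
  naturality m m' f := by
    ext p
    exact Subtype.ext (Prod.ext (prime_comp Y ν f p.2.1 p.1) rfl)

lemma k_comm : sprodMap (𝟙 Δ[0]) A.ι ≫ k1 Y A ν
    = sprodMap (ptJ false) (𝟙 A.toSSet) ≫ k2 Y A ν := by
  ext m p
  exact Subtype.ext (Prod.ext (prime_false Y ν _).symm rfl)

/-- The retraction on domains. -/
noncomputable def rLeft : PO Y A ⟶ (widenedSub Y A ν).toSSet :=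
  pushout.desc (k1 Y A ν) (k2 Y A ν) (k_comm Y A ν)

lemma rLeft_inl {m : SimplexCategoryᵒᵖ} (p : (sprod Δ[0] Y).obj m) :
    (rLeft Y A ν).app m ((poInl Y A).app m p) = (k1 Y A ν).app m p :=
  ConcreteCategory.congr_hom (NatTrans.congr_app (pushout.inl_desc (k1 Y A ν) (k2 Y A ν) (k_comm Y A ν)) m) p

lemma rLeft_inr {m : SimplexCategoryᵒᵖ} (p : (sprod J A.toSSet).obj m) :
    (rLeft Y A ν).app m ((poInr Y A).app m p) = (k2 Y A ν).app m p :=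
  ConcreteCategory.congr_hom (NatTrans.congr_app (pushout.inr_desc (k1 Y A ν) (k2 Y A ν) (k_comm Y A ν)) m) p

lemma pp_inl {m : SimplexCategoryᵒᵖ} (p : (sprod Δ[0] Y).obj m) :
    (pp (ptJ false) A.ι).app m ((poInl Y A).app m p)
      = (sprodMap (ptJ false) (𝟙 Y)).app m p :=
  ConcreteCategory.congr_hom (NatTrans.congr_app
    (pushout.inl_desc (sprodMap (ptJ false) (𝟙 Y)) (sprodMap (𝟙 J) A.ι) rfl) m) p

lemma pp_inr {m : SimplexCategoryᵒᵖ} (p : (sprod J A.toSSet).obj m) :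
    (pp (ptJ false) A.ι).app m ((poInr Y A).app m p)
      = (sprodMap (𝟙 J) A.ι).app m p :=
  ConcreteCategory.congr_hom (NatTrans.congr_app
    (pushout.inr_desc (sprodMap (ptJ false) (𝟙 Y)) (sprodMap (𝟙 J) A.ι) rfl) m) p

lemma pt_unique {m : SimplexCategoryᵒᵖ} (u v : (Δ[0] : SSet.{0}).obj m) : u = v := by
  apply SSet.stdSimplex.objEquiv.injective
  rw [SimplexCategory.eq_const_to_zero (SSet.stdSimplex.objEquiv u),
    SimplexCategory.eq_const_to_zero (SSet.stdSimplex.objEquiv v)]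

lemma false_of_not_mem {m : SimplexCategoryᵒᵖ} (x : (sprod J Y).obj m)
    (hx : x ∈ (widenedSub Y A ν).carrier m) (h : x.2 ∉ A.carrier m)
    (i : Fin (m.unop.len + 1)) : x.1 i = false := by
  rcases hx with hx | hx
  · exact hx (SimplexCategory.const (SimplexCategory.mk 0) m.unop i)
  · exact absurd hx.2 h

lemma true_imp {m : SimplexCategoryᵒᵖ} (x : (sprod J Y).obj m)
    (hx : x ∈ (widenedSub Y A ν).carrier m)
    (i : Fin (m.unop.len + 1)) (hi : x.1 i = true) : vtx Y x.2 i ∈ ν := by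
  rcases hx with hx | hx
  · have hc : x.1 i = false := hx (SimplexCategory.const (SimplexCategory.mk 0) m.unop i)
    rw [hi] at hc
    exact absurd hc (by simp)
  · have := hx.1 (SimplexCategory.const (SimplexCategory.mk 0) m.unop i) hi
    rw [vtx_eq] at this
    exact this.1

/-- Elementwise pushout glueing relation. -/
lemma inl_eq_inr {m : SimplexCategoryᵒᵖ} (u : (Δ[0] : SSet.{0}).obj m) (σ : Y.obj m)
    (h : σ ∈ A.carrier m) :
    (poInl Y A).app m (u, σ) = (poInr Y A).app m ((fun _ => false), ⟨σ, h⟩) :=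
  ConcreteCategory.congr_hom (NatTrans.congr_app
    (pushout.condition (f := sprodMap (𝟙 Δ[0]) A.ι)
      (g := sprodMap (ptJ false) (𝟙 A.toSSet))) m) ((u, ⟨σ, h⟩) : (sprod Δ[0] A.toSSet).obj m)

open Classical in
/-- The underlying function of the section on domains. -/
noncomputable def iLeftApp (m : SimplexCategoryᵒᵖ) (x : (widenedSub Y A ν).toSSet.obj m) :
    (PO Y A).obj m :=
  if h : x.1.2 ∈ A.carrier m then (poInr Y A).app m (x.1.1, ⟨x.1.2, h⟩)
  else (poInl Y A).app m (SSet.stdSimplex.const 0 0 m, x.1.2)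

lemma iLeftApp_pos {m : SimplexCategoryᵒᵖ} (a : J.obj m) (σ : Y.obj m)
    (hx : ((a, σ) : (sprod J Y).obj m) ∈ (widenedSub Y A ν).carrier m)
    (h : σ ∈ A.carrier m) :
    iLeftApp Y A ν m ⟨(a, σ), hx⟩ = (poInr Y A).app m (a, ⟨σ, h⟩) :=
  dif_pos h

lemma iLeftApp_neg {m : SimplexCategoryᵒᵖ} (a : J.obj m) (σ : Y.obj m)
    (hx : ((a, σ) : (sprod J Y).obj m) ∈ (widenedSub Y A ν).carrier m)
    (h : σ ∉ A.carrier m) :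
    iLeftApp Y A ν m ⟨(a, σ), hx⟩
      = (poInl Y A).app m (SSet.stdSimplex.const 0 0 m, σ) :=
  dif_neg h

/-- The section on domains. -/
noncomputable def iLeft : (widenedSub Y A ν).toSSet ⟶ PO Y A where
  app m := TypeCat.ofHom (iLeftApp Y A ν m)
  naturality m m' f := by
    ext x
    obtain ⟨⟨a, σ⟩, hx⟩ := x
    show iLeftApp Y A ν m' ((widenedSub Y A ν).toSSet.map f ⟨(a, σ), hx⟩)
      = (PO Y A).map f (iLeftApp Y A ν m ⟨(a, σ), hx⟩)
    rw [show (widenedSub Y A ν).toSSet.map f ⟨(a, σ), hx⟩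
      = ⟨(J.map f a, Y.map f σ), (widenedSub Y A ν).map_mem f hx⟩ from rfl]
    by_cases h : σ ∈ A.carrier m
    · rw [iLeftApp_pos Y A ν _ _ ((widenedSub Y A ν).map_mem f hx) (A.map_mem f h),
        iLeftApp_pos Y A ν a σ hx h]
      rw [← FunctorToTypes.naturality (poInr Y A) f ((a, ⟨σ, h⟩) : (sprod J A.toSSet).obj m)]
      rfl
    · rw [iLeftApp_neg Y A ν a σ hx h]
      have e1 := FunctorToTypes.naturality (poInl Y A) f
        ((SSet.stdSimplex.const 0 0 m, σ) : (sprod Δ[0] Y).obj m)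
      rw [← e1,
        show ((sprod Δ[0] Y).map f (SSet.stdSimplex.const 0 0 m, σ))
          = (SSet.stdSimplex.const 0 0 m', Y.map f σ) from
            Prod.ext (pt_unique _ _) rfl]
      by_cases h' : Y.map f σ ∈ A.carrier m'
      · rw [iLeftApp_pos Y A ν _ _ ((widenedSub Y A ν).map_mem f hx) h',
          inl_eq_inr Y A _ _ h']
        refine congrArg _ (Prod.ext ?_ rfl)
        funext i
        exact false_of_not_mem Y A ν (a, σ) hx h (f.unop.toOrderHom i)
      · rw [iLeftApp_neg Y A ν _ _ ((widenedSub Y A ν).map_mem f hx) h']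

lemma iLeft_app_pos {m : SimplexCategoryᵒᵖ} (a : J.obj m) (σ : Y.obj m)
    (hx : ((a, σ) : (sprod J Y).obj m) ∈ (widenedSub Y A ν).carrier m)
    (h : σ ∈ A.carrier m) :
    (iLeft Y A ν).app m ⟨(a, σ), hx⟩ = (poInr Y A).app m (a, ⟨σ, h⟩) :=
  dif_pos h

lemma iLeft_app_neg {m : SimplexCategoryᵒᵖ} (a : J.obj m) (σ : Y.obj m)
    (hx : ((a, σ) : (sprod J Y).obj m) ∈ (widenedSub Y A ν).carrier m)
    (h : σ ∉ A.carrier m) :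
    (iLeft Y A ν).app m ⟨(a, σ), hx⟩
      = (poInl Y A).app m (SSet.stdSimplex.const 0 0 m, σ) :=
  dif_neg h

lemma iLeft_comm : iLeft Y A ν ≫ pp (ptJ false) A.ι
    = widenedIncl Y A ν ≫ (wideSub Y ν).ι := by
  ext m x
  obtain ⟨⟨a, σ⟩, hx⟩ := x
  show (pp (ptJ false) A.ι).app m ((iLeft Y A ν).app m ⟨(a, σ), hx⟩) = (a, σ)
  by_cases h : σ ∈ A.carrier m
  · rw [iLeft_app_pos Y A ν a σ hx h]
    refine (pp_inr Y A _).trans ?_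
    rfl
  · rw [iLeft_app_neg Y A ν a σ hx h]
    refine (pp_inl Y A _).trans ?_
    refine Prod.ext ?_ rfl
    funext i
    exact (false_of_not_mem Y A ν (a, σ) hx h i).symm

lemma rLeft_comm : rLeft Y A ν ≫ widenedIncl Y A ν
    = pp (ptJ false) A.ι ≫ rRight Y ν := by
  apply pushout.hom_ext
  · rw [← Category.assoc, ← Category.assoc,
      show pushout.inl _ _ ≫ rLeft Y A ν = k1 Y A ν from pushout.inl_desc _ _ _,
      show pushout.inl _ _ ≫ pp (ptJ false) A.ι = sprodMap (ptJ false) (𝟙 Y) from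
        pushout.inl_desc _ _ _]
    ext m p
    exact Subtype.ext (Prod.ext (prime_false Y ν _).symm rfl)
  · rw [← Category.assoc, ← Category.assoc,
      show pushout.inr _ _ ≫ rLeft Y A ν = k2 Y A ν from pushout.inr_desc _ _ _,
      show pushout.inr _ _ ≫ pp (ptJ false) A.ι = sprodMap (𝟙 J) A.ι from
        pushout.inr_desc _ _ _]
    ext m p
    exact Subtype.ext rfl

lemma iLeft_rLeft : iLeft Y A ν ≫ rLeft Y A ν = 𝟙 _ := by
  ext m x
  obtain ⟨⟨a, σ⟩, hx⟩ := x
  show (rLeft Y A ν).app m ((iLeft Y A ν).app m ⟨(a, σ), hx⟩) = ⟨(a, σ), hx⟩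
  by_cases h : σ ∈ A.carrier m
  · rw [iLeft_app_pos Y A ν a σ hx h]
    refine (rLeft_inr Y A ν _).trans ?_
    exact Subtype.ext (Prod.ext
      (prime_eq_self Y ν σ a (fun i hi => true_imp Y A ν (a, σ) hx i hi)) rfl)
  · rw [iLeft_app_neg Y A ν a σ hx h]
    refine (rLeft_inl Y A ν _).trans ?_
    refine Subtype.ext (Prod.ext ?_ rfl)
    funext i
    exact (false_of_not_mem Y A ν (a, σ) hx h i).symm

end Retr

/-- For every inclusion of simplicial sets `X ↪ Y` (given by a
subcomplex `A` of `Y`) and every set `ν` of vertices of `Y`, the inclusion `X ↪ Y`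
widened at `ν` is a retract, in the arrow category, of the pushout-product
`({0} ↪ J) □ (X ↪ Y) : ({0} × Y) ∪ (J × X) ↪ J × Y`. -/
theorem widenedIncl_retract_of_pp (Y : SSet.{0}) (A : Sub Y) (ν : Set (Y.obj V0)) :
    ∃ (i : Arrow.mk (widenedIncl Y A ν) ⟶ Arrow.mk (pp (ptJ false) A.ι))
      (r : Arrow.mk (pp (ptJ false) A.ι) ⟶ Arrow.mk (widenedIncl Y A ν)),
      i ≫ r = 𝟙 _ := by
  refine ⟨Arrow.homMk (u := Retr.iLeft Y A ν) (v := (wideSub Y ν).ι)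
      (Retr.iLeft_comm Y A ν),
    Arrow.homMk (u := Retr.rLeft Y A ν) (v := Retr.rRight Y ν)
      (Retr.rLeft_comm Y A ν), ?_⟩
  apply CommaMorphism.ext
  · exact Retr.iLeft_rLeft Y A ν
  · exact Retr.rRight_retract Y ν

end Paper
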